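/- Let a₁, …, a_d ∈ ℕ^k be nonzero vectors with non-negative integer coordinates, let S = {μ₁a₁ + ⋯ + μ_d a_d : μ_i ∈ ℕ} be the additive semigroup they generate, and let f(S;X) = ∑_{m ∈ S} X^m be the multivariate formal power series in variables X₁, …, X_k over ℤ whose coefficient of X^m = X₁^{m₁}⋯X_k^{m_k} is 1 if m ∈ S and 0 otherwise. Then the power series (1 − X^{a₁})(1 − X^{a₂}) ⋯ (1 − X^{a_d}) · f(S;X) is a polynomial, i.e., it has only finitely many nonzero coefficients. -/

import Mathlib

set_option maxHeartbeats 1000000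

namespace Stmt15

open Finset MvPowerSeries
open scoped Classical

noncomputable section

variable {k d : ℕ}

/-- total weight of a multi-exponent -/
def wt (x : Fin k →₀ ℕ) : ℕ := ∑ j, x j

lemma wt_pos {x : Fin k →₀ ℕ} (hx : x ≠ 0) : 0 < wt x := by
  rcases Finsupp.ne_iff.1 hx with ⟨j, hj⟩
  simp only [Finsupp.coe_zero, Pi.zero_apply] at hj
  exact lt_of_lt_of_le (Nat.pos_of_ne_zero hj)
    (Finset.single_le_sum (fun _ _ => Nat.zero_le _) (mem_univ j))

variable (a : Fin d → (Fin k →₀ ℕ))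

/-- the additive map from exponent vectors to the semigroup -/
def phi (ν : Fin d → ℕ) : Fin k →₀ ℕ := ∑ i, ν i • a i

lemma phi_add (ν δ : Fin d → ℕ) : phi a (ν + δ) = phi a ν + phi a δ := by
  simp [phi, add_smul, Finset.sum_add_distrib]

lemma phi_zero : phi a 0 = 0 := by simp [phi]

lemma wt_phi (ν : Fin d → ℕ) : wt (phi a ν) = ∑ i, ν i * wt (a i) := by
  simp only [wt, phi, Finsupp.coe_finset_sum, Finset.sum_apply, Finsupp.smul_apply,
    smul_eq_mul]
  rw [Finset.sum_comm]
  simp [Finset.mul_sum]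

lemma nu_le (ha : ∀ i, a i ≠ 0) {ν : Fin d → ℕ} {m : Fin k →₀ ℕ}
    (h : phi a ν = m) (i : Fin d) : ν i ≤ wt m := by
  have h1 : 1 ≤ wt (a i) := wt_pos (ha i)
  calc ν i = ν i * 1 := (mul_one _).symm
    _ ≤ ν i * wt (a i) := Nat.mul_le_mul_left _ h1
    _ ≤ ∑ i', ν i' * wt (a i') :=
        Finset.single_le_sum (f := fun i' => ν i' * wt (a i'))
          (fun _ _ => Nat.zero_le _) (mem_univ i)
    _ = wt m := by rw [← wt_phi, h]

lemma phi_single (i : Fin d) : phi a (Pi.single i 1) = a i := by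
  simp only [phi]
  rw [Finset.sum_eq_single i]
  · simp
  · intro b _ hb; simp [Pi.single_apply, hb]
  · simp

lemma phi_eq_zero (ha : ∀ i, a i ≠ 0) {ν : Fin d → ℕ} (h : phi a ν = 0) : ν = 0 := by
  have hw : ∑ i, ν i * wt (a i) = 0 := by rw [← wt_phi a ν, h]; simp [wt]
  funext i
  have h2 := (Finset.sum_eq_zero_iff).1 hw i (mem_univ i)
  have h3 := wt_pos (ha i)
  show ν i = 0
  rcases Nat.mul_eq_zero.1 h2 with h' | h'
  · exact h'
  · omega

/-- finite set of exponent vectors `ν` with `phi ν = m` satisfying `p` -/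
def Fib (m : Fin k →₀ ℕ) (p : (Fin d → ℕ) → Prop) : Finset (Fin d → ℕ) :=
  (Fintype.piFinset fun _ : Fin d => Finset.range (wt m + 1)).filter
    fun ν => phi a ν = m ∧ p ν

lemma mem_Fib (ha : ∀ i, a i ≠ 0) {m : Fin k →₀ ℕ} {p : (Fin d → ℕ) → Prop}
    {ν : Fin d → ℕ} : ν ∈ Fib a m p ↔ phi a ν = m ∧ p ν := by
  constructor
  · intro h; exact (Finset.mem_filter.1 h).2
  · intro h
    refine Finset.mem_filter.2 ⟨?_, h⟩
    exact Fintype.mem_piFinset.2 fun i =>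
      Finset.mem_range.2 (Nat.lt_succ_of_le (nu_le a ha h.1 i))

lemma Fib_congr (ha : ∀ i, a i ≠ 0) {m : Fin k →₀ ℕ} {p q : (Fin d → ℕ) → Prop}
    (h : ∀ ν, phi a ν = m → (p ν ↔ q ν)) : Fib a m p = Fib a m q := by
  ext ν
  rw [mem_Fib a ha, mem_Fib a ha]
  exact ⟨fun ⟨h1, h2⟩ => ⟨h1, (h ν h1).1 h2⟩, fun ⟨h1, h2⟩ => ⟨h1, (h ν h1).2 h2⟩⟩

lemma Fib_filter (ha : ∀ i, a i ≠ 0) (m : Fin k →₀ ℕ) (p q : (Fin d → ℕ) → Prop) :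
    (Fib a m p).filter q = Fib a m fun ν => p ν ∧ q ν := by
  ext ν
  rw [Finset.mem_filter, mem_Fib a ha, mem_Fib a ha]
  tauto

lemma Fib_shift_empty (ha : ∀ i, a i ≠ 0) {δ : Fin d → ℕ} {m : Fin k →₀ ℕ}
    (h : ¬ phi a δ ≤ m) (p : (Fin d → ℕ) → Prop) :
    Fib a m (fun ν => δ ≤ ν ∧ p (ν - δ)) = ∅ := by
  ext ν
  simp only [Finset.notMem_empty, iff_false, mem_Fib a ha]
  rintro ⟨hphi, hle, -⟩
  apply h
  have hν : (ν - δ) + δ = ν := by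
    funext i; exact Nat.sub_add_cancel (hle i)
  rw [← hphi, ← hν, phi_add]
  exact le_add_self

lemma Fib_shift_card (ha : ∀ i, a i ≠ 0) {δ : Fin d → ℕ} {m : Fin k →₀ ℕ}
    (h : phi a δ ≤ m) (p : (Fin d → ℕ) → Prop) :
    (Fib a m (fun ν => δ ≤ ν ∧ p (ν - δ))).card = (Fib a (m - phi a δ) p).card := by
  apply Finset.card_nbij' (i := fun ν => ν - δ) (j := fun ν => ν + δ)
  · intro ν hν
    rw [Finset.mem_coe, mem_Fib a ha] at hν ⊢
    obtain ⟨hphi, hle, hp⟩ := hν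
    have hν2 : (ν - δ) + δ = ν := by funext i; exact Nat.sub_add_cancel (hle i)
    refine ⟨?_, hp⟩
    have : phi a (ν - δ) + phi a δ = m := by rw [← phi_add, hν2, hphi]
    exact eq_tsub_of_add_eq this
  · intro ν hν
    rw [Finset.mem_coe, mem_Fib a ha] at hν ⊢
    obtain ⟨hphi, hp⟩ := hν
    refine ⟨?_, ?_, ?_⟩
    · rw [phi_add, hphi, tsub_add_cancel_of_le h]
    · intro i; simp [Nat.le_add_left]
    · have : ν + δ - δ = ν := by
        funext i; show ν i + δ i - δ i = ν i; omega
      rw [this]; exact hp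
  · intro ν hν
    rw [Finset.mem_coe, mem_Fib a ha] at hν
    funext i; exact Nat.sub_add_cancel (hν.2.1 i)
  · intro ν _
    funext i; show ν i + δ i - δ i = ν i; omega

/-- counting power series -/
def Hs (p : (Fin d → ℕ) → Prop) : MvPowerSeries (Fin k) ℤ :=
  fun m => ((Fib a m p).card : ℤ)

lemma coeff_Hs (m : Fin k →₀ ℕ) (p : (Fin d → ℕ) → Prop) :
    MvPowerSeries.coeff m (Hs a p) = ((Fib a m p).card : ℤ) := rfl

/-- the factors 1 - X^{a i} -/
def u (i : Fin d) : MvPowerSeries (Fin k) ℤ :=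
  1 - MvPowerSeries.monomial (a i) 1

lemma coeff_u_mul (i : Fin d) (m : Fin k →₀ ℕ) (F : MvPowerSeries (Fin k) ℤ) :
    MvPowerSeries.coeff m (u a i * F) =
      MvPowerSeries.coeff m F -
        if a i ≤ m then MvPowerSeries.coeff (m - a i) F else 0 := by
  rw [u, sub_mul, one_mul, map_sub, MvPowerSeries.coeff_monomial_mul]
  simp [ite_mul, apply_ite (MvPowerSeries.coeff m)]

/-- support restricted to a set of indices -/
def Psup (s : Finset (Fin d)) : (Fin d → ℕ) → Prop := fun ν => ∀ i ∉ s, ν i = 0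

lemma Hs_empty (ha : ∀ i, a i ≠ 0) : Hs a (Psup ∅) = 1 := by
  ext m
  rw [coeff_Hs, MvPowerSeries.coeff_one]
  by_cases hm : m = 0
  · subst hm
    have : Fib a 0 (Psup ∅) = {0} := by
      ext ν
      rw [mem_Fib a ha, Finset.mem_singleton]
      constructor
      · rintro ⟨-, hp⟩
        funext i; exact hp i (Finset.notMem_empty i)
      · rintro rfl
        exact ⟨phi_zero a, fun i _ => rfl⟩
    simp [this]
  · have : Fib a m (Psup ∅) = ∅ := by
      ext ν
      simp only [Finset.notMem_empty, iff_false, mem_Fib a ha]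
      rintro ⟨hphi, hp⟩
      apply hm
      have : ν = 0 := by funext i; exact hp i (Finset.notMem_empty i)
      rw [← hphi, this, phi_zero]
    simp [this, hm]

lemma u_mul_Hs (ha : ∀ i, a i ≠ 0) {i₀ : Fin d} {s : Finset (Fin d)} (hi₀ : i₀ ∉ s) :
    u a i₀ * Hs a (Psup (insert i₀ s)) = Hs a (Psup s) := by
  ext m
  rw [coeff_u_mul]
  simp only [coeff_Hs]
  set e : Fin d → ℕ := Pi.single i₀ 1 with he
  have hphie : phi a e = a i₀ := phi_single a i₀
  have h1 : (Fib a m (Psup (insert i₀ s))).filter (fun ν => ν i₀ = 0) =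
      Fib a m (Psup s) := by
    ext ν
    rw [Finset.mem_filter, mem_Fib a ha, mem_Fib a ha]
    constructor
    · rintro ⟨⟨hphi, hp⟩, h0⟩
      refine ⟨hphi, fun i hi => ?_⟩
      rcases eq_or_ne i i₀ with rfl | hne
      · exact h0
      · exact hp i (by simp [Finset.mem_insert, hne, hi])
    · rintro ⟨hphi, hp⟩
      exact ⟨⟨hphi, fun i hi => hp i fun h => hi (Finset.mem_insert_of_mem h)⟩,
        hp i₀ hi₀⟩
  have h2 : (Fib a m (Psup (insert i₀ s))).filter (fun ν => ¬ ν i₀ = 0) =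
      Fib a m (fun ν => e ≤ ν ∧ Psup (insert i₀ s) (ν - e)) := by
    ext ν
    rw [Finset.mem_filter, mem_Fib a ha, mem_Fib a ha]
    constructor
    · rintro ⟨⟨hphi, hp⟩, h0⟩
      refine ⟨hphi, ?_, ?_⟩
      · intro i
        rcases eq_or_ne i i₀ with rfl | hne
        · simpa [he] using Nat.one_le_iff_ne_zero.2 h0
        · simp [he, Pi.single_apply, hne]
      · intro i hi
        have hii₀ : i ≠ i₀ := fun h => hi (h ▸ Finset.mem_insert_self i₀ s)
        have hz : ν i = 0 := hp i hi
        show ν i - e i = 0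
        simp [he, Pi.single_apply, hii₀, hz]
    · rintro ⟨hphi, hle, hp⟩
      refine ⟨⟨hphi, ?_⟩, ?_⟩
      · intro i hi
        have hii₀ : i ≠ i₀ := fun h => hi (h ▸ Finset.mem_insert_self i₀ s)
        have hpi := hp i hi
        have hei : e i = 0 := by simp [he, Pi.single_apply, hii₀]
        have : ν i - e i = 0 := hpi
        omega
      · have := hle i₀
        simp only [he, Pi.single_eq_same] at this
        omega
  have hsplit : (Fib a m (Psup (insert i₀ s))).card =
      (Fib a m (Psup s)).card +
        (Fib a m (fun ν => e ≤ ν ∧ Psup (insert i₀ s) (ν - e))).card := by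
    rw [← h1, ← h2]
    exact (Finset.card_filter_add_card_filter_not
      (p := fun ν : Fin d → ℕ => ν i₀ = 0)).symm
  by_cases hm : a i₀ ≤ m
  · rw [if_pos hm, hsplit]
    have hm' : phi a e ≤ m := by rw [hphie]; exact hm
    have hcard : (Fib a m (fun ν => e ≤ ν ∧ Psup (insert i₀ s) (ν - e))).card =
        (Fib a (m - a i₀) (Psup (insert i₀ s))).card := by
      have := Fib_shift_card a ha hm' (Psup (insert i₀ s))
      rw [hphie] at this
      exact this
    rw [hcard]
    push_cast
    ring
  · rw [if_neg hm, hsplit]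
    have hm' : ¬ phi a e ≤ m := by rw [hphie]; exact hm
    rw [Fib_shift_empty a ha hm' (Psup (insert i₀ s))]
    simp

lemma prod_u_mul_Hs (ha : ∀ i, a i ≠ 0) (s : Finset (Fin d)) :
    (∏ i ∈ s, u a i) * Hs a (Psup s) = 1 := by
  induction s using Finset.induction with
  | empty => simpa using Hs_empty a ha
  | @insert i s hi ih =>
      rw [Finset.prod_insert hi, mul_comm (u a i), mul_assoc, u_mul_Hs a ha hi, ih]

lemma Hs_ge (ha : ∀ i, a i ≠ 0) (μ₀ : Fin d → ℕ) :
    Hs a (fun ν => μ₀ ≤ ν) =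
      MvPowerSeries.monomial (phi a μ₀) 1 * Hs a (fun _ => True) := by
  ext m
  rw [MvPowerSeries.coeff_monomial_mul]
  simp only [coeff_Hs, one_mul]
  have hcg : Fib a m (fun ν => μ₀ ≤ ν) =
      Fib a m (fun ν => μ₀ ≤ ν ∧ (fun _ : Fin d → ℕ => True) (ν - μ₀)) :=
    Fib_congr a ha fun ν _ => by simp
  by_cases h : phi a μ₀ ≤ m
  · rw [if_pos h]
    have hcard : (Fib a m (fun ν => μ₀ ≤ ν)).card =
        (Fib a (m - phi a μ₀) (fun _ => True)).card := by
      rw [hcg]; exact Fib_shift_card a ha h (fun _ : Fin d → ℕ => True)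
    rw [hcard]
  · rw [if_neg h]
    have hemp : Fib a m (fun ν => μ₀ ≤ ν) = ∅ := by
      rw [hcg]; exact Fib_shift_empty a ha h (fun _ : Fin d → ℕ => True)
    rw [hemp]
    simp

/-! ### The lexicographic order and the staircase -/

noncomputable instance : LinearOrder (Lex (Fin d → ℕ)) :=
  @Pi.Lex.linearOrder (Fin d) (fun _ => ℕ)
    (inferInstanceAs (LinearOrder (Fin d))) (inferInstanceAs (WellFoundedLT (Fin d)))
    (fun _ => inferInstanceAs (LinearOrder ℕ))

lemma lex_add {x y δ : Fin d → ℕ} (h : toLex x < toLex y) :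
    toLex (x + δ) < toLex (y + δ) := by
  obtain ⟨i, hj, hi⟩ := h
  exact ⟨i, fun j hji => by
      simp only [Pi.toLex_apply, Pi.add_apply] at *
      rw [hj j hji],
    by simpa using Nat.add_lt_add_right hi (δ i)⟩

/-- vectors which are not the lex-minimal representative of their fiber -/
def Cset : Set (Fin d → ℕ) :=
  {μ | ∃ ν, phi a ν = phi a μ ∧ toLex ν < toLex μ}

lemma Cset_up {μ μ' : Fin d → ℕ} (h : μ ∈ Cset a) (hle : μ ≤ μ') : μ' ∈ Cset a := by
  obtain ⟨ν, hphi, hlt⟩ := h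
  have hμ' : μ + (μ' - μ) = μ' := by funext i; exact Nat.add_sub_cancel' (hle i)
  refine ⟨ν + (μ' - μ), ?_, ?_⟩
  · rw [phi_add, hphi, ← phi_add, hμ']
  · have h2 := lex_add (δ := μ' - μ) hlt
    rwa [hμ'] at h2
-- end

def Mset : Set (Fin d → ℕ) :=
  {μ | μ ∈ Cset a ∧ ∀ μ' ∈ Cset a, μ' ≤ μ → μ' = μ}

lemma Mset_finite : (Mset a).Finite := by
  have hanti : IsAntichain (· ≤ ·) (Mset a) := by
    intro x hx y hy hne hle
    exact hne (hy.2 x hx.1 hle)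
  exact hanti.finite_of_partiallyWellOrderedOn
    (Set.isPWO_of_wellQuasiOrderedLE (Mset a))

lemma Cset_cover (μ : Fin d → ℕ) (hμ : μ ∈ Cset a) :
    ∃ m ∈ Mset a, m ≤ μ := by
  by_cases hmin : ∀ μ' ∈ Cset a, μ' ≤ μ → μ' = μ
  · exact ⟨μ, ⟨hμ, hmin⟩, le_rfl⟩
  · push_neg at hmin
    obtain ⟨μ', hμ'C, hle, hne⟩ := hmin
    have key : ∑ i, μ' i < ∑ i, μ i := by
      obtain ⟨i, hi⟩ := Function.ne_iff.1 hne
      exact Finset.sum_lt_sum (fun j _ => hle j)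
        ⟨i, mem_univ i, lt_of_le_of_ne (hle i) hi⟩
    obtain ⟨m, hm, hmle⟩ := Cset_cover μ' hμ'C
    exact ⟨m, hm, hmle.trans hle⟩
termination_by ∑ i, μ i
decreasing_by exact key

/-- the finitely many minimal elements of the staircase complement -/
def M0 : Finset (Fin d → ℕ) := (Mset_finite a).toFinset

lemma mem_Cset_iff (μ : Fin d → ℕ) :
    μ ∈ Cset a ↔ ∃ j ∈ M0 a, j ≤ μ := by
  constructor
  · intro h
    obtain ⟨m, hm, hle⟩ := Cset_cover a μ h
    exact ⟨m, (Set.Finite.mem_toFinset _).2 hm, hle⟩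
  · rintro ⟨j, hj, hle⟩
    exact Cset_up a ((Set.Finite.mem_toFinset _).1 hj).1 hle

lemma card_N (ha : ∀ i, a i ≠ 0) (m : Fin k →₀ ℕ) :
    ((Fib a m (fun ν => ν ∉ Cset a)).card : ℤ) =
      if ∃ μ : Fin d → ℕ, m = phi a μ then 1 else 0 := by
  split_ifs with h
  · obtain ⟨μ, hμ⟩ := h
    have hne : (Fib a m (fun _ => True)).Nonempty :=
      ⟨μ, (mem_Fib a ha).2 ⟨hμ.symm, trivial⟩⟩
    obtain ⟨ν₀, hν₀mem, hmin⟩ :=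
      Finset.exists_min_image _ (fun ν : Fin d → ℕ => (toLex ν : Lex (Fin d → ℕ))) hne
    have hν₀phi : phi a ν₀ = m := ((mem_Fib a ha).1 hν₀mem).1
    have hν₀notC : ν₀ ∉ Cset a := by
      rintro ⟨ν', hphi, hlt⟩
      have hν'mem : ν' ∈ Fib a m (fun _ => True) :=
        (mem_Fib a ha).2 ⟨by rw [hphi, hν₀phi], trivial⟩
      exact absurd (hmin ν' hν'mem) (not_le_of_gt hlt)
    have : Fib a m (fun ν => ν ∉ Cset a) = {ν₀} := by
      ext ν
      rw [mem_Fib a ha, Finset.mem_singleton]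
      constructor
      · rintro ⟨hphi, hnC⟩
        by_contra hneq
        have hlexne : toLex ν ≠ toLex ν₀ := fun hh => hneq (toLex.injective hh)
        rcases hlexne.lt_or_gt with hlt | hlt
        · exact hν₀notC ⟨ν, by rw [hphi, hν₀phi], hlt⟩
        · exact hnC ⟨ν₀, by rw [hν₀phi, hphi], hlt⟩
      · rintro rfl
        exact ⟨hν₀phi, hν₀notC⟩
    simp [this]
  · have : Fib a m (fun ν => ν ∉ Cset a) = ∅ := by
      ext ν
      simp only [Finset.notMem_empty, iff_false, mem_Fib a ha]
      rintro ⟨hphi, -⟩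
      exact h ⟨ν, hphi.symm⟩
    simp [this]

lemma card_Fib_as_sum (ha : ∀ i, a i ≠ 0) (m : Fin k →₀ ℕ)
    (p : (Fin d → ℕ) → Prop) :
    ((Fib a m p).card : ℤ) =
      ∑ ν ∈ Fib a m (fun _ => True), if p ν then 1 else 0 := by
  have : Fib a m p = (Fib a m (fun _ => True)).filter p := by
    rw [Fib_filter a ha]
    exact Fib_congr a ha fun ν _ => by simp
  rw [this, Finset.card_filter]
  push_cast
  rfl

lemma f_decomp (ha : ∀ i, a i ≠ 0) (f : MvPowerSeries (Fin k) ℤ)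
    (hf : ∀ m : Fin k →₀ ℕ, MvPowerSeries.coeff m f =
      if ∃ μ : Fin d → ℕ, m = ∑ i, μ i • a i then 1 else 0) :
    f = ∑ J ∈ (M0 a).powerset,
      ((-1 : ℤ) ^ J.card) • Hs a (fun ν => J.sup id ≤ ν) := by
  ext m
  rw [map_sum, hf m]
  have hLHS : (if ∃ μ : Fin d → ℕ, m = ∑ i, μ i • a i then (1:ℤ) else 0) =
      ((Fib a m (fun ν => ν ∉ Cset a)).card : ℤ) := by
    rw [card_N a ha m]; rfl
  rw [hLHS]
  have hcoeff : ∀ J : Finset (Fin d → ℕ),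
      MvPowerSeries.coeff m (((-1 : ℤ) ^ J.card) • Hs a (fun ν => J.sup id ≤ ν)) =
        ((-1 : ℤ) ^ J.card) * ((Fib a m (fun ν => J.sup id ≤ ν)).card : ℤ) := by
    intro J
    rw [map_zsmul, coeff_Hs]
    simp
  simp only [hcoeff]
  have hterm : ∀ J : Finset (Fin d → ℕ),
      ((-1 : ℤ) ^ J.card) * ((Fib a m (fun ν => J.sup id ≤ ν)).card : ℤ) =
        ∑ ν ∈ Fib a m (fun _ => True),
          ∏ j ∈ J, (-(if j ≤ ν then (1:ℤ) else 0)) := by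
    intro J
    rw [card_Fib_as_sum a ha, Finset.mul_sum]
    apply Finset.sum_congr rfl
    intro ν _
    have h1 : ∏ j ∈ J, (-(if j ≤ ν then (1:ℤ) else 0)) =
        ((-1 : ℤ) ^ J.card) * ∏ j ∈ J, (if j ≤ ν then (1:ℤ) else 0) := by
      rw [← Finset.prod_const, ← Finset.prod_mul_distrib]
      apply Finset.prod_congr rfl
      intro j _; ring
    rw [h1, Finset.prod_boole]
    congr 1
    by_cases hb : J.sup id ≤ ν
    · rw [if_pos hb, if_pos]
      intro j hj
      exact le_trans (Finset.le_sup (f := id) hj) hb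
    · rw [if_neg hb, if_neg]
      intro hall
      exact hb (Finset.sup_le fun j hj => hall j hj)
  simp only [hterm]
  rw [Finset.sum_comm]
  have hprod : ∀ ν ∈ Fib a m (fun _ => True),
      (∑ J ∈ (M0 a).powerset, ∏ j ∈ J, (-(if j ≤ ν then (1:ℤ) else 0))) =
        if ν ∉ Cset a then (1:ℤ) else 0 := by
    intro ν _
    have := Finset.prod_add (fun j : Fin d → ℕ => -(if j ≤ ν then (1:ℤ) else 0))
      (fun _ => (1:ℤ)) (M0 a)
    simp only [Finset.prod_const_one, mul_one] at this
    rw [← this]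
    have : ∀ j : Fin d → ℕ, (-(if j ≤ ν then (1:ℤ) else 0) + 1) =
        if ¬ (j ≤ ν) then (1:ℤ) else 0 := by
      intro j; by_cases hj : j ≤ ν <;> simp [hj]
    simp only [this]
    rw [Finset.prod_boole]
    have hiff : (∀ j ∈ M0 a, ¬ j ≤ ν) ↔ ν ∉ Cset a := by
      rw [mem_Cset_iff]
      push_neg
      exact Iff.rfl
    by_cases hx : ν ∉ Cset a
    · rw [if_pos (hiff.2 hx), if_pos hx]
    · rw [if_neg (fun h => hx (hiff.1 h)), if_neg hx]
  rw [Finset.sum_congr rfl hprod, card_Fib_as_sum a ha]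
  exact Finset.sum_congr rfl fun x _ => by by_cases hx : x ∉ Cset a <;> simp [hx]

lemma monomial_prod {α : Type*} (s : Finset α) (e : α → (Fin k →₀ ℕ)) :
    (∏ j ∈ s, MvPowerSeries.monomial (e j) (1:ℤ)) =
      MvPowerSeries.monomial (∑ j ∈ s, e j) 1 := by
  induction s using Finset.induction with
  | empty => simp [MvPowerSeries.monomial_zero_one]
  | @insert i s hi ih =>
      rw [Finset.prod_insert hi, Finset.sum_insert hi, ih,
        MvPowerSeries.monomial_mul_monomial, one_mul]

end

end Stmt15

open Stmt15 in
open scoped Classical in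
theorem stmt_15 (k d : ℕ) (a : Fin d → (Fin k →₀ ℕ)) (ha : ∀ i, a i ≠ 0)
    (f : MvPowerSeries (Fin k) ℤ)
    (hf : ∀ m : Fin k →₀ ℕ, MvPowerSeries.coeff m f =
      if ∃ μ : Fin d → ℕ, m = ∑ i, μ i • a i then 1 else 0) :
    {m : Fin k →₀ ℕ | MvPowerSeries.coeff m
      ((∏ i, (1 - ∏ j, (MvPowerSeries.X j : MvPowerSeries (Fin k) ℤ) ^ (a i j))) * f)
        ≠ 0}.Finite := by
  classical
  have hXmono : ∀ i, (∏ j, (MvPowerSeries.X j : MvPowerSeries (Fin k) ℤ) ^ (a i j)) =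
      MvPowerSeries.monomial (a i) 1 := by
    intro i
    have h1 : ∀ j : Fin k, (MvPowerSeries.X j : MvPowerSeries (Fin k) ℤ) ^ (a i j) =
        MvPowerSeries.monomial (Finsupp.single j (a i j)) 1 := fun j =>
      MvPowerSeries.X_pow_eq j (a i j)
    simp only [h1]
    rw [monomial_prod]
    exact congrArg (fun e => MvPowerSeries.monomial e (1:ℤ))
      (Finsupp.univ_sum_single (a i))
  have hprod : (∏ i, ((1 : MvPowerSeries (Fin k) ℤ) -
      ∏ j, (MvPowerSeries.X j : MvPowerSeries (Fin k) ℤ) ^ (a i j))) = ∏ i, u a i := by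
    apply Finset.prod_congr rfl
    intro i _
    rw [hXmono i, u]
  have hHtop : Hs a (fun _ => True) = Hs a (Psup (Finset.univ : Finset (Fin d))) := by
    ext m
    rw [coeff_Hs, coeff_Hs]
    congr 1
    exact congrArg Finset.card (Fib_congr a ha fun ν _ =>
      ⟨fun _ i hi => absurd (Finset.mem_univ i) hi, fun _ => trivial⟩)
  have hPQ : (∏ i, u a i) * f =
      ∑ J ∈ (M0 a).powerset,
        ((-1 : ℤ) ^ J.card) • (MvPowerSeries.monomial (phi a (J.sup id)) (1:ℤ)) := by
    rw [f_decomp a ha f hf, Finset.mul_sum]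
    apply Finset.sum_congr rfl
    intro J _
    rw [Hs_ge a ha, mul_smul_comm]
    congr 1
    rw [hHtop, ← mul_assoc, mul_comm (∏ i, u a i), mul_assoc,
      prod_u_mul_Hs a ha Finset.univ, mul_one]
  rw [hprod, hPQ]
  apply Set.Finite.subset
    (Set.finite_coe_iff.mp ?_ : ((((M0 a).powerset.image fun J => phi a (J.sup id)) : Finset _) : Set (Fin k →₀ ℕ)).Finite)
  · intro m hm
    simp only [Set.mem_setOf_eq] at hm
    by_contra hmem
    apply hm
    rw [map_sum]
    apply Finset.sum_eq_zero
    intro J hJ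
    rw [map_zsmul, MvPowerSeries.coeff_monomial]
    have : m ≠ phi a (J.sup id) := by
      intro hcontr
      exact hmem (by
        simp only [Finset.coe_image, Set.mem_image, Finset.mem_coe]
        exact ⟨J, hJ, hcontr.symm⟩)
    simp [this]
  · exact Set.finite_coe_iff.mpr (Finset.finite_toSet _)
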